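/- Let l be a positive integer. Then for every integer μ ≥ 2 one has k_{μ,l} ≥ (2^{2l+b} / (m π^{2l-1})) · μ^{2l-m}. -/

import Mathlib

open MeasureTheory Real

lemma abs_sin_nat_mul_le (n : ℕ) (x : ℝ) : |Real.sin (n * x)| ≤ n * |Real.sin x| := by
  induction n with
  | zero => simp
  | succ n ih =>
    push_cast
    rw [add_mul, one_mul, Real.sin_add]
    have h1 : |Real.sin (n * x) * Real.cos x| ≤ (n : ℝ) * |Real.sin x| := by
      rw [abs_mul]
      calc |Real.sin (n * x)| * |Real.cos x| ≤ |Real.sin (n * x)| * 1 := by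
            gcongr; exact Real.abs_cos_le_one x
        _ = |Real.sin (n * x)| := mul_one _
        _ ≤ (n : ℝ) * |Real.sin x| := ih
    have h2 : |Real.cos (n * x) * Real.sin x| ≤ |Real.sin x| := by
      rw [abs_mul]
      calc |Real.cos (n * x)| * |Real.sin x| ≤ 1 * |Real.sin x| := by
            gcongr; exact Real.abs_cos_le_one _
        _ = |Real.sin x| := one_mul _
    calc |Real.sin (n * x) * Real.cos x + Real.cos (n * x) * Real.sin x|
        ≤ |Real.sin (n * x) * Real.cos x| + |Real.cos (n * x) * Real.sin x| := abs_add_le _ _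
      _ ≤ ((n : ℝ) + 1) * |Real.sin x| := by nlinarith [abs_nonneg (Real.sin x)]

/-- With `m = a + b + 1`, `α(t) = sin(t/2)^a (sin t)^b` and
`D_{μ,l}(t) = (sin(μt/2)/sin(t/2))^(2l)`, for every integer `μ ≥ 2` the normalizing
constant `k_{μ,l} = ∫_0^π D_{μ,l}(t) α(t) dt` satisfies
`k_{μ,l} ≥ (2^(2l+b) / (m π^(2l-1))) · μ^(2l-m)`. -/
theorem stmt_1 (a b : ℕ) (m : ℕ) (hm : m = a + b + 1) (l : ℕ) (hl : 1 ≤ l) :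
    ∀ μ : ℕ, 2 ≤ μ →
      (2 ^ (2 * l + b) / ((m : ℝ) * π ^ (2 * l - 1))) * (μ : ℝ) ^ ((2 * l : ℤ) - m)
        ≤ ∫ t in Set.Ioo (0 : ℝ) π,
            (Real.sin (μ * t / 2) / Real.sin (t / 2)) ^ (2 * l) *
              ((Real.sin (t / 2)) ^ a * (Real.sin t) ^ b) := by
  intro μ hμ
  have hπ := Real.pi_pos
  have hμ2 : (2 : ℝ) ≤ (μ : ℝ) := by exact_mod_cast hμ
  have hμ0 : (0 : ℝ) < (μ : ℝ) := by linarith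
  set f : ℝ → ℝ := fun t =>
      (Real.sin (μ * t / 2) / Real.sin (t / 2)) ^ (2 * l) *
        ((Real.sin (t / 2)) ^ a * (Real.sin t) ^ b) with hf
  set c : ℝ := π / μ with hcdef
  have hc0 : 0 < c := div_pos hπ hμ0
  have hc2 : c ≤ π / 2 := by
    rw [hcdef, div_le_div_iff₀ hμ0 two_pos]; nlinarith
  have hcπ : c < π := lt_of_le_of_lt hc2 (by linarith)
  -- nonnegativity of f on (0, π)
  have hfnn : ∀ t ∈ Set.Ioo (0 : ℝ) π, 0 ≤ f t := by
    intro t ht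
    have h1 : 0 ≤ Real.sin (t / 2) :=
      Real.sin_nonneg_of_nonneg_of_le_pi (by linarith [ht.1]) (by linarith [ht.2])
    have h2 : 0 ≤ Real.sin t := Real.sin_nonneg_of_nonneg_of_le_pi ht.1.le ht.2.le
    have h3 : 0 ≤ (Real.sin (μ * t / 2) / Real.sin (t / 2)) ^ (2 * l) :=
      (even_two_mul l).pow_nonneg _
    positivity
  -- boundedness of f on (0, π)
  have hfbdd : ∀ t ∈ Set.Ioo (0 : ℝ) π, ‖f t‖ ≤ (μ : ℝ) ^ (2 * l) := by
    intro t ht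
    have hs2 : 0 < Real.sin (t / 2) :=
      Real.sin_pos_of_pos_of_lt_pi (by linarith [ht.1]) (by linarith [ht.2, hπ])
    have hs1 : Real.sin (t / 2) ≤ 1 := Real.sin_le_one _
    have hst : 0 ≤ Real.sin t := Real.sin_nonneg_of_nonneg_of_le_pi ht.1.le ht.2.le
    have hst1 : Real.sin t ≤ 1 := Real.sin_le_one _
    have hnum : |Real.sin (μ * t / 2)| ≤ (μ : ℝ) * Real.sin (t / 2) := by
      have := abs_sin_nat_mul_le μ (t / 2)
      rw [abs_of_pos hs2] at this
      calc |Real.sin (μ * t / 2)| = |Real.sin ((μ : ℝ) * (t / 2))| := by ring_nf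
        _ ≤ (μ : ℝ) * Real.sin (t / 2) := this
    have hratio : |Real.sin (μ * t / 2) / Real.sin (t / 2)| ≤ (μ : ℝ) := by
      rw [abs_div, abs_of_pos hs2, div_le_iff₀ hs2]
      calc |Real.sin (μ * t / 2)| ≤ (μ : ℝ) * Real.sin (t / 2) := hnum
        _ = (μ : ℝ) * Real.sin (t / 2) := rfl
    rw [Real.norm_eq_abs, abs_of_nonneg (hfnn t ht)]
    calc (Real.sin (μ * t / 2) / Real.sin (t / 2)) ^ (2 * l) *
          ((Real.sin (t / 2)) ^ a * (Real.sin t) ^ b)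
        ≤ (Real.sin (μ * t / 2) / Real.sin (t / 2)) ^ (2 * l) * (1 * 1) := by
          have h3 : 0 ≤ (Real.sin (μ * t / 2) / Real.sin (t / 2)) ^ (2 * l) :=
            (even_two_mul l).pow_nonneg _
          gcongr
          · exact pow_le_one₀ hs2.le hs1
          · exact pow_le_one₀ hst hst1
      _ = (Real.sin (μ * t / 2) / Real.sin (t / 2)) ^ (2 * l) := by ring
      _ = |Real.sin (μ * t / 2) / Real.sin (t / 2)| ^ (2 * l) := by
          rw [← abs_pow, abs_of_nonneg ((even_two_mul l).pow_nonneg _)]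
      _ ≤ (μ : ℝ) ^ (2 * l) := pow_le_pow_left₀ (abs_nonneg _) hratio _
  -- integrability of f on (0, π)
  have hmeas : AEStronglyMeasurable f volume := by
    apply Measurable.aestronglyMeasurable
    fun_prop
  have hfi : IntegrableOn f (Set.Ioo 0 π) volume := by
    apply Measure.integrableOn_of_bounded (M := (μ : ℝ) ^ (2 * l))
    · exact (measure_Ioo_lt_top).ne
    · exact hmeas
    · exact ae_restrict_of_forall_mem measurableSet_Ioo hfbdd
  -- comparison function g
  set C : ℝ := (2 * μ / π) ^ (2 * l) * (2 ^ b / π ^ (a + b)) with hCdef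
  set g : ℝ → ℝ := fun t => C * t ^ (a + b) with hg
  -- pointwise bound g ≤ f on (0, c)
  have hgf : ∀ t ∈ Set.Ioo (0 : ℝ) c, g t ≤ f t := by
    intro t ht
    obtain ⟨ht0, htc⟩ := ht
    have htπ2 : t ≤ π / 2 := le_of_lt (lt_of_lt_of_le htc hc2)
    have hμtπ : (μ : ℝ) * t ≤ π := by
      rw [hcdef, lt_div_iff₀ hμ0] at htc; linarith [htc]
    have hs2 : 0 < Real.sin (t / 2) :=
      Real.sin_pos_of_pos_of_lt_pi (by linarith) (by linarith)
    -- lower bound for sin(μt/2)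
    have hnum : (μ : ℝ) * t / π ≤ Real.sin (μ * t / 2) := by
      have h := Real.mul_le_sin (x := (μ : ℝ) * t / 2) (by positivity) (by linarith)
      calc (μ : ℝ) * t / π = 2 / π * ((μ : ℝ) * t / 2) := by field_simp
        _ ≤ Real.sin ((μ : ℝ) * t / 2) := h
        _ = Real.sin (μ * t / 2) := by norm_num
    -- upper bound for sin(t/2)
    have hden : Real.sin (t / 2) ≤ t / 2 := Real.sin_le (by linarith)
    -- ratio lower bound
    have hratio : 2 * (μ : ℝ) / π ≤ Real.sin (μ * t / 2) / Real.sin (t / 2) := by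
      rw [le_div_iff₀ hs2]
      calc 2 * (μ : ℝ) / π * Real.sin (t / 2) ≤ 2 * (μ : ℝ) / π * (t / 2) := by
            gcongr
        _ = (μ : ℝ) * t / π := by ring
        _ ≤ Real.sin (μ * t / 2) := hnum
    -- lower bounds for the weight
    have hw1 : t / π ≤ Real.sin (t / 2) := by
      have h := Real.mul_le_sin (x := t / 2) (by linarith) (by linarith)
      calc t / π = 2 / π * (t / 2) := by field_simp
        _ ≤ Real.sin (t / 2) := h
    have hw2 : 2 * t / π ≤ Real.sin t := by
      have h := Real.mul_le_sin (x := t) (by linarith) htπ2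
      calc 2 * t / π = 2 / π * t := by ring
        _ ≤ Real.sin t := h
    have hratnn : (0:ℝ) ≤ 2 * (μ : ℝ) / π := by positivity
    have key : (2 * (μ:ℝ) / π) ^ (2 * l) * ((t / π) ^ a * (2 * t / π) ^ b) ≤ f t := by
      apply mul_le_mul
      · exact pow_le_pow_left₀ hratnn hratio _
      · apply mul_le_mul
        · exact pow_le_pow_left₀ (by positivity) hw1 _
        · exact pow_le_pow_left₀ (by positivity) hw2 _
        · positivity
        · positivity
      · positivity
      · exact (even_two_mul l).pow_nonneg _
    calc g t = (2 * (μ:ℝ) / π) ^ (2 * l) * ((t / π) ^ a * (2 * t / π) ^ b) := by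
          rw [hg, hCdef]
          simp only [div_pow, mul_pow, pow_add]
          field_simp
      _ ≤ f t := key
  -- integrability of g
  have hgi : IntegrableOn g (Set.Ioo 0 c) volume := by
    have hgc : Continuous g := by fun_prop
    exact (hgc.continuousOn.integrableOn_compact isCompact_Icc).mono_set Set.Ioo_subset_Icc_self
  -- the chain of inequalities
  have step1 : ∫ t in Set.Ioo (0:ℝ) c, g t ≤ ∫ t in Set.Ioo (0:ℝ) c, f t := by
    apply setIntegral_mono_on hgi (hfi.mono_set (Set.Ioo_subset_Ioo_right hcπ.le))
      measurableSet_Ioo hgf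
  have step2 : ∫ t in Set.Ioo (0:ℝ) c, f t ≤ ∫ t in Set.Ioo (0:ℝ) π, f t := by
    apply setIntegral_mono_set hfi
    · exact ae_restrict_of_forall_mem measurableSet_Ioo hfnn
    · exact (Set.Ioo_subset_Ioo_right hcπ.le).eventuallyLE
  -- compute the integral of g
  have hgval : ∫ t in Set.Ioo (0:ℝ) c, g t = C * (c ^ m / m) := by
    rw [hg]
    simp only []
    rw [MeasureTheory.integral_const_mul]
    congr 1
    have h1 : ∫ t in Set.Ioo (0:ℝ) c, t ^ (a + b) = ∫ t in (0:ℝ)..c, t ^ (a + b) := by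
      rw [intervalIntegral.integral_of_le hc0.le, MeasureTheory.integral_Ioc_eq_integral_Ioo]
    rw [h1, integral_pow]
    simp [hm]
  -- final algebraic computation
  have hfinal : (2 ^ (2 * l + b) / ((m : ℝ) * π ^ (2 * l - 1))) * (μ : ℝ) ^ ((2 * l : ℤ) - m)
      = C * (c ^ m / m) := by
    obtain ⟨k, hk⟩ : ∃ k, 2 * l = k + 1 := ⟨2 * l - 1, by omega⟩
    have hk1 : 2 * l - 1 = k := by omega
    have hzpow : (μ : ℝ) ^ ((2 * l : ℤ) - m) = (μ : ℝ) ^ (2 * l) / (μ : ℝ) ^ m := by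
      rw [zpow_sub₀ (ne_of_gt hμ0)]
      norm_cast
    rw [hzpow, hCdef, hcdef, hk1, hk, hm]
    have hπ' : π ≠ 0 := ne_of_gt hπ
    have hμ' : (μ : ℝ) ≠ 0 := ne_of_gt hμ0
    have hm' : ((a : ℝ) + b + 1) ≠ 0 := by positivity
    field_simp
    simp only [div_pow]
    field_simp
    ring
  rw [hfinal]
  calc C * (c ^ m / m) = ∫ t in Set.Ioo (0:ℝ) c, g t := hgval.symm
    _ ≤ ∫ t in Set.Ioo (0:ℝ) π, f t := le_trans step1 step2
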